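/- arXiv:2001.08167 — 3 statements merged into one kernel-verified Lean document; each statement's English description precedes it below -/
import Mathlib

section
/- The generalized Vandermonde-type matrix with rows (1, ξ₁^j, ξ₂^j, ξ₃^j) for j = 1,2,3,4 is invertible whenever ξ₁, ξ₂, ξ₃ are pairwise distinct real numbers in the open interval (0,1). -/
open Matrix

theorem vandermonde_type_four_invertible
    (ξ : Fin 3 → ℝ)
    (hpos : ∀ i, 0 < ξ i) (hlt : ∀ i, ξ i < 1)
    (hinj : Function.Injective ξ)
    (M : Matrix (Fin 4) (Fin 4) ℝ)
    (hM : ∀ j : Fin 4, M j 0 = 1 ∧ ∀ i : Fin 3, M j i.succ = ξ i ^ ((j : ℕ) + 1)) :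
    M.det ≠ 0 := by
  set x : Fin 4 → ℝ := Fin.cons 1 ξ with hx
  have hxinj : Function.Injective x := by
    intro a b
    refine Fin.cases ?_ (fun i => ?_) a
    · refine Fin.cases ?_ (fun j => ?_) b
      · intro _; rfl
      · intro h
        simp only [hx, Fin.cons_zero, Fin.cons_succ] at h
        exact absurd h.symm (ne_of_lt (hlt j))
    · refine Fin.cases ?_ (fun j => ?_) b
      · intro h
        simp only [hx, Fin.cons_zero, Fin.cons_succ] at h
        exact absurd h (ne_of_lt (hlt i))
      · intro h
        simp only [hx, Fin.cons_succ] at h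
        exact congrArg Fin.succ (hinj h)
  have hMeq : M = (Matrix.vandermonde x)ᵀ * Matrix.diagonal x := by
    ext j k
    rw [Matrix.mul_diagonal]
    refine Fin.cases ?_ ?_ k
    · simp [hx, (hM j).1, Matrix.vandermonde]
    · intro i
      simp [hx, (hM j).2 i, Matrix.vandermonde, pow_succ]
  rw [hMeq, Matrix.det_mul, Matrix.det_transpose, Matrix.det_vandermonde,
    Matrix.det_diagonal]
  apply mul_ne_zero
  · apply Finset.prod_ne_zero_iff.2
    intro i _
    apply Finset.prod_ne_zero_iff.2
    intro j hj
    rw [Finset.mem_Ioi] at hj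
    exact sub_ne_zero_of_ne (fun h => absurd (hxinj h) (ne_of_gt hj))
  · apply Finset.prod_ne_zero_iff.2
    intro i _
    refine Fin.cases ?_ ?_ i
    · simp [hx]
    · intro j; simp [hx]; exact ne_of_gt (hpos j)
end

section
/- Qutrit dynamic tomography: if ρ is a 3×3 density matrix evolving as ρ(t) = D(t) ∘ ρ with the phase-damping dynamic matrix D(t) (pairwise distinct positive decoherence rates γ₁,γ₂,γ₃), then ρ is uniquely determined by the 8 numbers Tr(Q₁ ρ(kt)) and Tr(Q₂ ρ(kt)) for k = 1,2,3,4, for any t > 0; i.e., if two density matrices give the same 8 measurement values, they are equal. -/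
open Matrix Complex

/-- Transposed-Vandermonde elimination for 4 nodes `1, W1, W2, W3`. -/
lemma vand4 (W1 W2 W3 A B C D : ℂ)
    (h01 : W1 ≠ 1) (h02 : W2 ≠ 1) (h03 : W3 ≠ 1)
    (hn1 : W1 ≠ 0) (hn2 : W2 ≠ 0) (hn3 : W3 ≠ 0)
    (d12 : W1 ≠ W2) (d13 : W1 ≠ W3) (d23 : W2 ≠ W3)
    (e1 : A + B * W1 + C * W2 + D * W3 = 0)
    (e2 : A + B * W1 ^ 2 + C * W2 ^ 2 + D * W3 ^ 2 = 0)
    (e3 : A + B * W1 ^ 3 + C * W2 ^ 3 + D * W3 ^ 3 = 0)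
    (e4 : A + B * W1 ^ 4 + C * W2 ^ 4 + D * W3 ^ 4 = 0) :
    A = 0 ∧ B = 0 ∧ C = 0 ∧ D = 0 := by
  have n01 : (1 : ℂ) - W1 ≠ 0 := sub_ne_zero.mpr h01.symm
  have n02 : (1 : ℂ) - W2 ≠ 0 := sub_ne_zero.mpr h02.symm
  have n03 : (1 : ℂ) - W3 ≠ 0 := sub_ne_zero.mpr h03.symm
  have m01 : W1 - 1 ≠ 0 := sub_ne_zero.mpr h01
  have m02 : W2 - 1 ≠ 0 := sub_ne_zero.mpr h02
  have m03 : W3 - 1 ≠ 0 := sub_ne_zero.mpr h03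
  have n12 : W1 - W2 ≠ 0 := sub_ne_zero.mpr d12
  have n21 : W2 - W1 ≠ 0 := sub_ne_zero.mpr d12.symm
  have n13 : W1 - W3 ≠ 0 := sub_ne_zero.mpr d13
  have n31 : W3 - W1 ≠ 0 := sub_ne_zero.mpr d13.symm
  have n23 : W2 - W3 ≠ 0 := sub_ne_zero.mpr d23
  have n32 : W3 - W2 ≠ 0 := sub_ne_zero.mpr d23.symm
  have hA : A * ((1 - W1) * (1 - W2) * (1 - W3)) = 0 := by
    linear_combination (-(W1 * W2 * W3)) * e1 + (W1 * W2 + W1 * W3 + W2 * W3) * e2 +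
      (-(W1 + W2 + W3)) * e3 + e4
  have hB : B * (W1 * (W1 - 1) * (W1 - W2) * (W1 - W3)) = 0 := by
    linear_combination (-(W2 * W3)) * e1 + (W2 + W3 + W2 * W3) * e2 +
      (-(1 + W2 + W3)) * e3 + e4
  have hC : C * (W2 * (W2 - 1) * (W2 - W1) * (W2 - W3)) = 0 := by
    linear_combination (-(W1 * W3)) * e1 + (W1 + W3 + W1 * W3) * e2 +
      (-(1 + W1 + W3)) * e3 + e4
  have hD : D * (W3 * (W3 - 1) * (W3 - W1) * (W3 - W2)) = 0 := by
    linear_combination (-(W1 * W2)) * e1 + (W1 + W2 + W1 * W2) * e2 +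
      (-(1 + W1 + W2)) * e3 + e4
  refine ⟨?_, ?_, ?_, ?_⟩
  · rcases mul_eq_zero.mp hA with h | h
    · exact h
    · exact absurd h (by exact mul_ne_zero (mul_ne_zero n01 n02) n03)
  · rcases mul_eq_zero.mp hB with h | h
    · exact h
    · exact absurd h (mul_ne_zero (mul_ne_zero (mul_ne_zero hn1 m01) n12) n13)
  · rcases mul_eq_zero.mp hC with h | h
    · exact h
    · exact absurd h (mul_ne_zero (mul_ne_zero (mul_ne_zero hn2 m02) n21) n23)
  · rcases mul_eq_zero.mp hD with h | h
    · exact h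
    · exact absurd h (mul_ne_zero (mul_ne_zero (mul_ne_zero hn3 m03) n31) n32)

theorem qutrit_dynamic_tomography
    (γ₁ γ₂ γ₃ t : ℝ) (h1 : 0 < γ₁) (h2 : 0 < γ₂) (h3 : 0 < γ₃)
    (h12 : γ₁ ≠ γ₂) (h13 : γ₁ ≠ γ₃) (h23 : γ₂ ≠ γ₃) (ht : 0 < t)
    (D : ℝ → Matrix (Fin 3) (Fin 3) ℂ)
    (hD : ∀ s, D s = !![1, (Real.exp (-γ₁ * s) : ℂ), (Real.exp (-γ₂ * s) : ℂ);
        (Real.exp (-γ₁ * s) : ℂ), 1, (Real.exp (-γ₃ * s) : ℂ);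
        (Real.exp (-γ₂ * s) : ℂ), (Real.exp (-γ₃ * s) : ℂ), 1])
    (Q₁ Q₂ : Matrix (Fin 3) (Fin 3) ℂ)
    (hQ₁ : Q₁ = !![1, 1, -I; 1, -1, -I; I, I, 0])
    (hQ₂ : Q₂ = !![(Real.sqrt 3 : ℂ)⁻¹, -I, 1; I, (Real.sqrt 3 : ℂ)⁻¹, 1;
                   1, 1, -2 * (Real.sqrt 3 : ℂ)⁻¹])
    (ρ σ : Matrix (Fin 3) (Fin 3) ℂ)
    (hρ : ρ.IsHermitian) (hσ : σ.IsHermitian)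
    (htρ : ρ.trace = 1) (htσ : σ.trace = 1)
    (hmeas : ∀ k : Fin 4,
      (Q₁ * ((D ((k + 1 : ℕ) * t)).hadamard ρ)).trace =
        (Q₁ * ((D ((k + 1 : ℕ) * t)).hadamard σ)).trace ∧
      (Q₂ * ((D ((k + 1 : ℕ) * t)).hadamard ρ)).trace =
        (Q₂ * ((D ((k + 1 : ℕ) * t)).hadamard σ)).trace) :
    ρ = σ := by
  obtain ⟨e11, e12⟩ := hmeas 0
  obtain ⟨e21, e22⟩ := hmeas 1
  obtain ⟨e31, e32⟩ := hmeas 2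
  obtain ⟨e41, e42⟩ := hmeas 3
  have hv1 : ((1 : Fin 4) : ℕ) = 1 := rfl
  have hv2 : ((2 : Fin 4) : ℕ) = 2 := rfl
  have hv3 : ((3 : Fin 4) : ℕ) = 3 := rfl
  simp only [hD, hQ₁, hQ₂, Matrix.trace_fin_three, Matrix.mul_apply, Fin.sum_univ_three,
    Matrix.hadamard_apply, Matrix.cons_val', Matrix.cons_val_zero, Matrix.cons_val_one,
    Matrix.head_cons, Matrix.head_fin_const, Matrix.empty_val', Matrix.cons_val_fin_one,
    Matrix.cons_val_two, Matrix.tail_cons, Matrix.cons_val, hv1, hv2, hv3]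
    at e11 e12 e21 e22 e31 e32 e41 e42
  norm_num at e11 e12 e21 e22 e31 e32 e41 e42
  simp only [Matrix.cons_val, Fin.isValue, Matrix.cons_val_zero, Matrix.cons_val_one,
    Matrix.head_cons, Matrix.cons_val_two, Matrix.tail_cons, Matrix.head_fin_const]
    at e11 e12 e21 e22 e31 e32 e41 e42
  -- rewrite exponentials as powers
  have hpn : ∀ (γ : ℝ) (n : ℕ), Complex.exp (-((γ : ℂ) * ((n : ℂ) * (t : ℂ))))
      = Complex.exp (-((γ : ℂ) * (t : ℂ))) ^ n := by
    intro γ n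
    rw [← Complex.exp_nat_mul]
    congr 1
    ring
  have hp2 : ∀ γ : ℝ, Complex.exp (-((γ : ℂ) * (2 * (t : ℂ))))
      = Complex.exp (-((γ : ℂ) * (t : ℂ))) ^ 2 := by
    intro γ; have h := hpn γ 2; push_cast at h; exact h
  have hp3 : ∀ γ : ℝ, Complex.exp (-((γ : ℂ) * (3 * (t : ℂ))))
      = Complex.exp (-((γ : ℂ) * (t : ℂ))) ^ 3 := by
    intro γ; have h := hpn γ 3; push_cast at h; exact h
  have hp4 : ∀ γ : ℝ, Complex.exp (-((γ : ℂ) * (4 * (t : ℂ))))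
      = Complex.exp (-((γ : ℂ) * (t : ℂ))) ^ 4 := by
    intro γ; have h := hpn γ 4; push_cast at h; exact h
  rw [hp2 γ₁, hp2 γ₂, hp2 γ₃] at e21 e22
  rw [hp3 γ₁, hp3 γ₂, hp3 γ₃] at e31 e32
  rw [hp4 γ₁, hp4 γ₂, hp4 γ₃] at e41 e42
  set W1 := Complex.exp (-((γ₁ : ℂ) * (t : ℂ))) with hW1
  set W2 := Complex.exp (-((γ₂ : ℂ) * (t : ℂ))) with hW2
  set W3 := Complex.exp (-((γ₃ : ℂ) * (t : ℂ))) with hW3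
  -- basic facts about the nodes
  have hofReal : ∀ γ : ℝ, Complex.exp (-((γ : ℂ) * (t : ℂ)))
      = ((Real.exp (-(γ * t)) : ℝ) : ℂ) := by
    intro γ
    rw [Complex.ofReal_exp]
    congr 1
    push_cast
    ring
  have hne1 : ∀ γ : ℝ, 0 < γ → Complex.exp (-((γ : ℂ) * (t : ℂ))) ≠ 1 := by
    intro γ hγ h
    rw [hofReal] at h
    have h' : Real.exp (-(γ * t)) = 1 := by exact_mod_cast h
    rw [Real.exp_eq_one_iff] at h'
    nlinarith
  have hnei : ∀ a b : ℝ, a ≠ b →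
      Complex.exp (-((a : ℂ) * (t : ℂ))) ≠ Complex.exp (-((b : ℂ) * (t : ℂ))) := by
    intro a b hab h
    rw [hofReal, hofReal] at h
    have h' : Real.exp (-(a * t)) = Real.exp (-(b * t)) := by exact_mod_cast h
    have h'' := Real.exp_eq_exp.mp h'
    exact hab (mul_right_cancel₀ ht.ne' (neg_injective h''))
  have hn0 : ∀ γ : ℝ, Complex.exp (-((γ : ℂ) * (t : ℂ))) ≠ 0 := fun γ => Complex.exp_ne_zero _
  -- apply Vandermonde elimination to the Q₁ family
  obtain ⟨hA1, hB1, hC1, hD1⟩ := vand4 W1 W2 W3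
    ((ρ 0 0 - σ 0 0) - (ρ 1 1 - σ 1 1))
    ((ρ 0 1 - σ 0 1) + (ρ 1 0 - σ 1 0))
    (I * ((ρ 0 2 - σ 0 2) - (ρ 2 0 - σ 2 0)))
    (I * ((ρ 1 2 - σ 1 2) - (ρ 2 1 - σ 2 1)))
    (hne1 γ₁ h1) (hne1 γ₂ h2) (hne1 γ₃ h3) (hn0 γ₁) (hn0 γ₂) (hn0 γ₃)
    (hnei γ₁ γ₂ h12) (hnei γ₁ γ₃ h13) (hnei γ₂ γ₃ h23)
    (by linear_combination e11) (by linear_combination e21)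
    (by linear_combination e31) (by linear_combination e41)
  -- apply Vandermonde elimination to the Q₂ family
  obtain ⟨hA2, hB2, hC2, hD2⟩ := vand4 W1 W2 W3
    (((Real.sqrt 3 : ℝ) : ℂ)⁻¹ * ((ρ 0 0 - σ 0 0) + (ρ 1 1 - σ 1 1) - 2 * (ρ 2 2 - σ 2 2)))
    (I * ((ρ 0 1 - σ 0 1) - (ρ 1 0 - σ 1 0)))
    ((ρ 0 2 - σ 0 2) + (ρ 2 0 - σ 2 0))
    ((ρ 1 2 - σ 1 2) + (ρ 2 1 - σ 2 1))
    (hne1 γ₁ h1) (hne1 γ₂ h2) (hne1 γ₃ h3) (hn0 γ₁) (hn0 γ₂) (hn0 γ₃)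
    (hnei γ₁ γ₂ h12) (hnei γ₁ γ₃ h13) (hnei γ₂ γ₃ h23)
    (by linear_combination e12) (by linear_combination e22)
    (by linear_combination e32) (by linear_combination e42)
  -- clean up the obtained linear relations
  have hI : (I : ℂ) ≠ 0 := Complex.I_ne_zero
  have hs3 : (((Real.sqrt 3 : ℝ) : ℂ))⁻¹ ≠ 0 := by
    apply inv_ne_zero
    exact_mod_cast (Real.sqrt_pos.mpr (by norm_num : (0:ℝ) < 3)).ne'
  have hA2' : (ρ 0 0 - σ 0 0) + (ρ 1 1 - σ 1 1) - 2 * (ρ 2 2 - σ 2 2) = 0 :=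
    (mul_eq_zero.mp hA2).resolve_left hs3
  have hB2' : (ρ 0 1 - σ 0 1) - (ρ 1 0 - σ 1 0) = 0 :=
    (mul_eq_zero.mp hB2).resolve_left hI
  have hC1' : (ρ 0 2 - σ 0 2) - (ρ 2 0 - σ 2 0) = 0 :=
    (mul_eq_zero.mp hC1).resolve_left hI
  have hD1' : (ρ 1 2 - σ 1 2) - (ρ 2 1 - σ 2 1) = 0 :=
    (mul_eq_zero.mp hD1).resolve_left hI
  have htr : ρ 0 0 + ρ 1 1 + ρ 2 2 = σ 0 0 + σ 1 1 + σ 2 2 := by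
    have := htρ.trans htσ.symm
    simpa [Matrix.trace_fin_three] using this
  ext i j
  fin_cases i <;> fin_cases j
  · show ρ 0 0 = σ 0 0
    linear_combination hA1 / 2 + hA2' / 6 + htr / 3
  · show ρ 0 1 = σ 0 1
    linear_combination (hB1 + hB2') / 2
  · show ρ 0 2 = σ 0 2
    linear_combination (hC2 + hC1') / 2
  · show ρ 1 0 = σ 1 0
    linear_combination (hB1 - hB2') / 2
  · show ρ 1 1 = σ 1 1
    linear_combination -hA1 / 2 + hA2' / 6 + htr / 3
  · show ρ 1 2 = σ 1 2
    linear_combination (hD2 + hD1') / 2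
  · show ρ 2 0 = σ 2 0
    linear_combination (hC2 - hC1') / 2
  · show ρ 2 1 = σ 2 1
    linear_combination (hD2 - hD1') / 2
  · show ρ 2 2 = σ 2 2
    linear_combination htr / 3 - hA2' / 3
end

section
/- Entangled-qubit tomography: for the Bell-diagonal state family and the observable Q = E₁₁ − E₂₂ + E₂₃ + E₃₂ + E₁₄ + E₄₁, the measurement results m(s) = Tr(Q (D(s) ∘ ρ)) satisfy m(s) = Tr(Λ¹ρ) + e^{-γ₃s} Tr(Λ_s^{14}ρ) + e^{-γ₄s} Tr(Λ_s^{23}ρ), and the map (p₁,p₂,p₃) ↦ (m(t), m(2t), m(3t)) is injective whenever γ₃ ≠ γ₄ are positive and t > 0. -/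
open Matrix

theorem entangled_qubit_tomography
    (γ₁ γ₂ γ₃ γ₄ γ₅ γ₆ t : ℝ) (h3 : 0 < γ₃) (h4 : 0 < γ₄) (h34 : γ₃ ≠ γ₄) (ht : 0 < t)
    (D : ℝ → Matrix (Fin 4) (Fin 4) ℂ)
    (hD : ∀ s, D s =
      !![1, (Real.exp (-γ₁ * s) : ℂ), (Real.exp (-γ₂ * s) : ℂ), (Real.exp (-γ₃ * s) : ℂ);
         (Real.exp (-γ₁ * s) : ℂ), 1, (Real.exp (-γ₄ * s) : ℂ), (Real.exp (-γ₅ * s) : ℂ);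
         (Real.exp (-γ₂ * s) : ℂ), (Real.exp (-γ₄ * s) : ℂ), 1, (Real.exp (-γ₆ * s) : ℂ);
         (Real.exp (-γ₃ * s) : ℂ), (Real.exp (-γ₅ * s) : ℂ), (Real.exp (-γ₆ * s) : ℂ), 1])
    (Q Λ1 Λs14 Λs23 : Matrix (Fin 4) (Fin 4) ℂ)
    (hQ : Q = !![1,0,0,1; 0,-1,1,0; 0,1,0,0; 1,0,0,0])
    (hΛ1 : Λ1 = !![1,0,0,0; 0,-1,0,0; 0,0,0,0; 0,0,0,0])
    (hΛs14 : Λs14 = !![0,0,0,1; 0,0,0,0; 0,0,0,0; 1,0,0,0])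
    (hΛs23 : Λs23 = !![0,0,0,0; 0,0,1,0; 0,1,0,0; 0,0,0,0])
    (ρ : ℝ → ℝ → ℝ → Matrix (Fin 4) (Fin 4) ℂ)
    (hρ : ∀ p₁ p₂ p₃ : ℝ,
      ρ p₁ p₂ p₃ =
        (p₁ : ℂ) • vecMulVec ![(Real.sqrt 2 : ℂ)⁻¹, 0, 0, (Real.sqrt 2 : ℂ)⁻¹]
            (star ![(Real.sqrt 2 : ℂ)⁻¹, 0, 0, (Real.sqrt 2 : ℂ)⁻¹]) +
        (p₂ : ℂ) • vecMulVec ![(Real.sqrt 2 : ℂ)⁻¹, 0, 0, -(Real.sqrt 2 : ℂ)⁻¹]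
            (star ![(Real.sqrt 2 : ℂ)⁻¹, 0, 0, -(Real.sqrt 2 : ℂ)⁻¹]) +
        (p₃ : ℂ) • vecMulVec ![0, (Real.sqrt 2 : ℂ)⁻¹, (Real.sqrt 2 : ℂ)⁻¹, 0]
            (star ![0, (Real.sqrt 2 : ℂ)⁻¹, (Real.sqrt 2 : ℂ)⁻¹, 0]) +
        ((1 - (p₁ + p₂ + p₃) : ℝ) : ℂ) •
          vecMulVec ![0, (Real.sqrt 2 : ℂ)⁻¹, -(Real.sqrt 2 : ℂ)⁻¹, 0]
            (star ![0, (Real.sqrt 2 : ℂ)⁻¹, -(Real.sqrt 2 : ℂ)⁻¹, 0]))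
    (m : ℝ → ℝ → ℝ → ℝ → ℂ)
    (hm : ∀ p₁ p₂ p₃ s, m p₁ p₂ p₃ s = (Q * ((D s).hadamard (ρ p₁ p₂ p₃))).trace) :
    (∀ p₁ p₂ p₃ s, m p₁ p₂ p₃ s =
        (Λ1 * ρ p₁ p₂ p₃).trace +
        (Real.exp (-γ₃ * s) : ℂ) * (Λs14 * ρ p₁ p₂ p₃).trace +
        (Real.exp (-γ₄ * s) : ℂ) * (Λs23 * ρ p₁ p₂ p₃).trace) ∧
    (∀ p₁ p₂ p₃ q₁ q₂ q₃ : ℝ,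
      (∀ k : Fin 3, m p₁ p₂ p₃ ((k + 1 : ℕ) * t) = m q₁ q₂ q₃ ((k + 1 : ℕ) * t)) →
      p₁ = q₁ ∧ p₂ = q₂ ∧ p₃ = q₃) := by
  have h2 : ((Real.sqrt 2 : ℂ))⁻¹ * ((Real.sqrt 2 : ℂ))⁻¹ = 1/2 := by
    rw [← mul_inv]
    norm_num [← Complex.ofReal_mul, Real.mul_self_sqrt]
  -- explicit value of m
  have key : ∀ p₁ p₂ p₃ s : ℝ, m p₁ p₂ p₃ s =
      (((p₁ + p₂ - 1/2) + Real.exp (-γ₃ * s) * (p₁ - p₂)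
        + Real.exp (-γ₄ * s) * (p₁ + p₂ + 2*p₃ - 1) : ℝ) : ℂ) := by
    intro p₁ p₂ p₃ s
    rw [hm, hD, hQ, hρ]
    simp [Matrix.trace, Matrix.diag, Fin.sum_univ_four, Matrix.mul_apply, hadamard_apply,
      Matrix.add_apply, Matrix.smul_apply, vecMulVec_apply, Complex.conj_ofReal, smul_eq_mul,
      Matrix.vecHead, Matrix.vecTail, -Matrix.cons_vecMulVec, Complex.ofReal_exp]
    linear_combination (2*(p₁:ℂ) + 2*p₂ - 1 + 2*(Complex.exp (-(γ₃*s))) * (p₁ - p₂)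
      + 2*(Complex.exp (-(γ₄*s)))*((p₁:ℂ)+p₂+2*p₃-1)) * h2
  have tr1 : ∀ p₁ p₂ p₃ : ℝ, (Λ1 * ρ p₁ p₂ p₃).trace = ((p₁ + p₂ - 1/2 : ℝ) : ℂ) := by
    intro p₁ p₂ p₃
    rw [hΛ1, hρ]
    simp [Matrix.trace, Matrix.diag, Fin.sum_univ_four, Matrix.mul_apply,
      Matrix.add_apply, Matrix.smul_apply, vecMulVec_apply, Complex.conj_ofReal, smul_eq_mul,
      Matrix.vecHead, Matrix.vecTail, -Matrix.cons_vecMulVec]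
    linear_combination (2*(p₁:ℂ) + 2*p₂ - 1) * h2
  have tr14 : ∀ p₁ p₂ p₃ : ℝ, (Λs14 * ρ p₁ p₂ p₃).trace = ((p₁ - p₂ : ℝ) : ℂ) := by
    intro p₁ p₂ p₃
    rw [hΛs14, hρ]
    simp [Matrix.trace, Matrix.diag, Fin.sum_univ_four, Matrix.mul_apply,
      Matrix.add_apply, Matrix.smul_apply, vecMulVec_apply, Complex.conj_ofReal, smul_eq_mul,
      Matrix.vecHead, Matrix.vecTail, -Matrix.cons_vecMulVec]
    linear_combination (2*(p₁:ℂ) - 2*p₂) * h2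
  have tr23 : ∀ p₁ p₂ p₃ : ℝ, (Λs23 * ρ p₁ p₂ p₃).trace = ((p₁ + p₂ + 2*p₃ - 1 : ℝ) : ℂ) := by
    intro p₁ p₂ p₃
    rw [hΛs23, hρ]
    simp [Matrix.trace, Matrix.diag, Fin.sum_univ_four, Matrix.mul_apply,
      Matrix.add_apply, Matrix.smul_apply, vecMulVec_apply, Complex.conj_ofReal, smul_eq_mul,
      Matrix.vecHead, Matrix.vecTail, -Matrix.cons_vecMulVec]
    linear_combination (2*(p₁:ℂ) + 2*p₂ + 4*p₃ - 2) * h2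
  constructor
  · intro p₁ p₂ p₃ s
    rw [key, tr1, tr14, tr23]
    push_cast
    ring
  · intro p₁ p₂ p₃ q₁ q₂ q₃ hk
    set x := Real.exp (-(γ₃ * t)) with hxdef
    set y := Real.exp (-(γ₄ * t)) with hydef
    have hx0 : 0 < x := Real.exp_pos _
    have hy0 : 0 < y := Real.exp_pos _
    have hx1 : x < 1 := by
      rw [hxdef, Real.exp_lt_one_iff]
      nlinarith
    have hy1 : y < 1 := by
      rw [hydef, Real.exp_lt_one_iff]
      nlinarith
    have hxy : x ≠ y := by
      rw [hxdef, hydef]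
      intro h
      rw [Real.exp_eq_exp] at h
      apply h34
      have h' : γ₃ * t = γ₄ * t := by linarith
      have := mul_right_cancel₀ (ne_of_gt ht) h'
      linarith
    have ex2 : Real.exp (-(γ₃ * (2*t))) = x * x := by
      rw [hxdef, ← Real.exp_add]; congr 1; ring
    have ex3 : Real.exp (-(γ₃ * (3*t))) = x * x * x := by
      rw [hxdef, ← Real.exp_add, ← Real.exp_add]; congr 1; ring
    have ey2 : Real.exp (-(γ₄ * (2*t))) = y * y := by
      rw [hydef, ← Real.exp_add]; congr 1; ring
    have ey3 : Real.exp (-(γ₄ * (3*t))) = y * y * y := by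
      rw [hydef, ← Real.exp_add, ← Real.exp_add]; congr 1; ring
    have g1 := hk 0
    have g2 := hk 1
    have g3 := hk 2
    rw [key, key, Complex.ofReal_inj] at g1 g2 g3
    norm_num at g1 g2 g3
    rw [ex2, ey2] at g2
    rw [ex3, ey3] at g3
    -- linear algebra: Vandermonde-type elimination
    have hc : y*(y-1)*(y-x)*((p₁+p₂+2*p₃)-(q₁+q₂+2*q₃)) = 0 := by
      linear_combination g3 - (1+x)*g2 + x*g1
    have hc' : (p₁+p₂+2*p₃)-(q₁+q₂+2*q₃) = 0 := by
      by_contra h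
      exact (mul_ne_zero (mul_ne_zero (mul_ne_zero (ne_of_gt hy0)
        (sub_ne_zero.mpr (ne_of_lt hy1))) (sub_ne_zero.mpr (Ne.symm hxy))) h) hc
    have hb : x*(x-1)*((p₁-p₂)-(q₁-q₂)) = 0 := by
      linear_combination g2 - g1 - y*(y-1)*hc'
    have hb' : (p₁-p₂)-(q₁-q₂) = 0 := by
      by_contra h
      exact (mul_ne_zero (mul_ne_zero (ne_of_gt hx0)
        (sub_ne_zero.mpr (ne_of_lt hx1))) h) hb
    have ha' : (p₁+p₂)-(q₁+q₂) = 0 := by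
      linear_combination g1 - x*hb' - y*hc'
    refine ⟨by linarith, by linarith, by linarith⟩
end
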